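/- Each of the four transposed twists satisfies the quaternion property: for every ω among ω₀*, ω₁*, ω₂*, ω₃* and all natural numbers p, q with 1 ≤ p, 1 ≤ q and p ≠ q, if ω(p, q) = 1 then ω(q, p ^^^ q) = 1 and ω(p ^^^ q, p) = 1. -/

import Mathlib

/-- Twist of the transposed doubling product `P₀ᵗ : (a,b)(c,d) = (ca − bd*, ad + c*b)`. -/
def omega0t (p q : ℕ) : ℤ :=
  if p = 0 ∧ q = 0 then 1
  else if p % 2 = 0 then
    if q % 2 = 0 then omega0t (q / 2) (p / 2)
    else omega0t (p / 2) (q / 2)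
  else
    if q % 2 = 0 then
      if 0 < q / 2 then -omega0t (q / 2) (p / 2) else 1
    else if 0 < q / 2 then omega0t (p / 2) (q / 2) else -1
termination_by p + q
decreasing_by all_goals omega

/-- Twist of the transposed doubling product `P₁ᵗ : (a,b)(c,d) = (ca − d*b, da + bc*)`. -/
def omega1t (p q : ℕ) : ℤ :=
  if p = 0 ∧ q = 0 then 1
  else if p % 2 = 0 then
    if q % 2 = 0 then omega1t (q / 2) (p / 2)
    else omega1t (q / 2) (p / 2)
  else
    if q % 2 = 0 then
      if 0 < q / 2 then -omega1t (p / 2) (q / 2) else 1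
    else if 0 < q / 2 then omega1t (q / 2) (p / 2) else -1
termination_by p + q
decreasing_by all_goals omega

/-- Twist of the transposed doubling product `P₂ᵗ : (a,b)(c,d) = (ac − bd*, ad + c*b)`. -/
def omega2t (p q : ℕ) : ℤ :=
  if p = 0 ∧ q = 0 then 1
  else if p % 2 = 0 then
    if q % 2 = 0 then omega2t (p / 2) (q / 2)
    else omega2t (p / 2) (q / 2)
  else
    if q % 2 = 0 then
      if 0 < q / 2 then -omega2t (q / 2) (p / 2) else 1
    else if 0 < q / 2 then omega2t (p / 2) (q / 2) else -1
termination_by p + q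
decreasing_by all_goals omega

/-- Twist of the transposed doubling product `P₃ᵗ : (a,b)(c,d) = (ac − d*b, da + bc*)`. -/
def omega3t (p q : ℕ) : ℤ :=
  if p = 0 ∧ q = 0 then 1
  else if p % 2 = 0 then
    if q % 2 = 0 then omega3t (p / 2) (q / 2)
    else omega3t (q / 2) (p / 2)
  else
    if q % 2 = 0 then
      if 0 < q / 2 then -omega3t (p / 2) (q / 2) else 1
    else if 0 < q / 2 then omega3t (q / 2) (p / 2) else -1
termination_by p + q
decreasing_by all_goals omega



lemma xdiv (a b : ℕ) : (a ^^^ b) / 2 = a / 2 ^^^ b / 2 := by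
  apply Nat.eq_of_testBit_eq
  intro i
  simp [Nat.testBit_div_two]

lemma xcancel (r s : ℕ) : r ^^^ (r ^^^ s) = s := by
  rw [← Nat.xor_assoc, Nat.xor_self, Nat.zero_xor]

lemma xle : ∀ n a b : ℕ, a + b ≤ n → a ^^^ b ≤ a + b := by
  intro n
  induction n with
  | zero =>
    intro a b h
    obtain ⟨rfl, rfl⟩ : a = 0 ∧ b = 0 := by omega
    simp
  | succ n ih =>
    intro a b h
    rcases Nat.eq_zero_or_pos (a + b) with h0 | h0
    · obtain ⟨rfl, rfl⟩ : a = 0 ∧ b = 0 := by omega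
      simp
    · have h1 := xdiv a b
      have h2 := Nat.xor_mod_two_eq (m := a) (n := b)
      have h3 := Nat.div_add_mod (a ^^^ b) 2
      have h4 := ih (a/2) (b/2) (by omega)
      omega

lemma xor_le_add (a b : ℕ) : a ^^^ b ≤ a + b := xle (a+b) a b le_rfl

lemma xor_ee (r s : ℕ) : (2*r) ^^^ (2*s) = 2*(r ^^^ s) := by
  have h1 := xdiv (2*r) (2*s)
  have h2 := Nat.xor_mod_two_eq (m := 2*r) (n := 2*s)
  have h3 := Nat.div_add_mod ((2*r) ^^^ (2*s)) 2
  have e1 : (2*r)/2 = r := by omega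
  have e2 : (2*s)/2 = s := by omega
  rw [e1, e2] at h1
  omega

lemma xor_eo (r s : ℕ) : (2*r) ^^^ (2*s+1) = 2*(r ^^^ s) + 1 := by
  have h1 := xdiv (2*r) (2*s+1)
  have h2 := Nat.xor_mod_two_eq (m := 2*r) (n := 2*s+1)
  have h3 := Nat.div_add_mod ((2*r) ^^^ (2*s+1)) 2
  have e1 : (2*r)/2 = r := by omega
  have e2 : (2*s+1)/2 = s := by omega
  rw [e1, e2] at h1
  omega

lemma xor_oe (r s : ℕ) : (2*r+1) ^^^ (2*s) = 2*(r ^^^ s) + 1 := by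
  have h1 := xdiv (2*r+1) (2*s)
  have h2 := Nat.xor_mod_two_eq (m := 2*r+1) (n := 2*s)
  have h3 := Nat.div_add_mod ((2*r+1) ^^^ (2*s)) 2
  have e1 : (2*r+1)/2 = r := by omega
  have e2 : (2*s)/2 = s := by omega
  rw [e1, e2] at h1
  omega

lemma xor_oo (r s : ℕ) : (2*r+1) ^^^ (2*s+1) = 2*(r ^^^ s) := by
  have h1 := xdiv (2*r+1) (2*s+1)
  have h2 := Nat.xor_mod_two_eq (m := 2*r+1) (n := 2*s+1)
  have h3 := Nat.div_add_mod ((2*r+1) ^^^ (2*s+1)) 2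
  have e1 : (2*r+1)/2 = r := by omega
  have e2 : (2*s+1)/2 = s := by omega
  rw [e1, e2] at h1
  omega

def Wg (c1 c2 : Bool) (p q : ℕ) : ℤ :=
  if p = 0 ∧ q = 0 then 1
  else if p % 2 = 0 then
    if q % 2 = 0 then (if c1 then Wg c1 c2 (q/2) (p/2) else Wg c1 c2 (p/2) (q/2))
    else (if c2 then Wg c1 c2 (q/2) (p/2) else Wg c1 c2 (p/2) (q/2))
  else
    if q % 2 = 0 then
      if 0 < q / 2 then -(if c2 then Wg c1 c2 (p/2) (q/2) else Wg c1 c2 (q/2) (p/2)) else 1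
    else if 0 < q / 2 then (if c2 then Wg c1 c2 (q/2) (p/2) else Wg c1 c2 (p/2) (q/2)) else -1
termination_by p + q
decreasing_by all_goals omega

lemma Wee (c1 c2 : Bool) (r s : ℕ) :
    Wg c1 c2 (2*r) (2*s) = if c1 then Wg c1 c2 s r else Wg c1 c2 r s := by
  rw [Wg]
  rcases Nat.eq_zero_or_pos (r + s) with h0 | h0
  · obtain ⟨rfl, rfl⟩ : r = 0 ∧ s = 0 := by omega
    norm_num
    cases c1 <;> simp [Wg]
  · have e1 : (2*r)/2 = r := by omega
    have e2 : (2*s)/2 = s := by omega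
    simp only [e1, e2]
    rw [if_neg (by omega), if_pos (by omega), if_pos (by omega)]

lemma Weo (c1 c2 : Bool) (r s : ℕ) :
    Wg c1 c2 (2*r) (2*s+1) = if c2 then Wg c1 c2 s r else Wg c1 c2 r s := by
  rw [Wg]
  have e1 : (2*r)/2 = r := by omega
  have e2 : (2*s+1)/2 = s := by omega
  simp only [e1, e2]
  rw [if_neg (by omega), if_pos (by omega), if_neg (by omega)]

lemma Woe (c1 c2 : Bool) (r s : ℕ) :
    Wg c1 c2 (2*r+1) (2*s) =
      if 0 < s then -(if c2 then Wg c1 c2 r s else Wg c1 c2 s r) else 1 := by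
  rw [Wg]
  have e1 : (2*r+1)/2 = r := by omega
  have e2 : (2*s)/2 = s := by omega
  simp only [e1, e2]
  rw [if_neg (by omega), if_neg (by omega), if_pos (by omega)]

lemma Woo (c1 c2 : Bool) (r s : ℕ) :
    Wg c1 c2 (2*r+1) (2*s+1) =
      if 0 < s then (if c2 then Wg c1 c2 s r else Wg c1 c2 r s) else -1 := by
  rw [Wg]
  have e1 : (2*r+1)/2 = r := by omega
  have e2 : (2*s+1)/2 = s := by omega
  simp only [e1, e2]
  rw [if_neg (by omega), if_neg (by omega), if_neg (by omega)]

lemma Wzero (c1 c2 : Bool) : ∀ n m, m ≤ n → Wg c1 c2 m 0 = 1 ∧ Wg c1 c2 0 m = 1 := by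
  intro n
  induction n with
  | zero =>
    intro m h
    obtain rfl : m = 0 := by omega
    constructor <;> (rw [Wg]; norm_num)
  | succ n ih =>
    intro m h
    rcases Nat.eq_zero_or_pos m with rfl | hm
    · constructor <;> (rw [Wg]; norm_num)
    · obtain ⟨z1, z2⟩ := ih (m / 2) (by omega)
      rcases Nat.mod_two_eq_zero_or_one m with h2 | h2
      · obtain ⟨k, hk⟩ : ∃ k, m = 2 * k := ⟨m / 2, by omega⟩
        have hk2 : m / 2 = k := by omega
        rw [hk2] at z1 z2
        subst hk
        constructor
        · have := Wee c1 c2 k 0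
          norm_num at this
          rw [this]; cases c1 <;> simpa
        · have := Wee c1 c2 0 k
          norm_num at this
          rw [this]; cases c1 <;> simpa
      · obtain ⟨k, hk⟩ : ∃ k, m = 2 * k + 1 := ⟨m / 2, by omega⟩
        have hk2 : m / 2 = k := by omega
        rw [hk2] at z1 z2
        subst hk
        constructor
        · have := Woe c1 c2 k 0
          norm_num at this
          rw [this]
        · have := Weo c1 c2 0 k
          norm_num at this
          rw [this]; cases c2 <;> simpa

lemma Wdiag (c1 c2 : Bool) : ∀ n r, r ≤ n → 1 ≤ r → Wg c1 c2 r r = -1 := by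
  intro n
  induction n with
  | zero => intro r h h1; exact absurd h (by omega)
  | succ n ih =>
    intro r h h1
    rcases Nat.mod_two_eq_zero_or_one r with h2 | h2
    · obtain ⟨k, hk⟩ : ∃ k, r = 2 * k := ⟨r / 2, by omega⟩
      subst hk
      rw [Wee]
      have := ih k (by omega) (by omega)
      cases c1 <;> simpa
    · obtain ⟨k, hk⟩ : ∃ k, r = 2 * k + 1 := ⟨r / 2, by omega⟩
      subst hk
      rw [Woo]
      rcases Nat.eq_zero_or_pos k with rfl | hk1
      · norm_num
      · rw [if_pos hk1]
        have := ih k (by omega) hk1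
        cases c2 <;> simpa



set_option maxHeartbeats 1000000 in
lemma Wmain (c1 c2 : Bool) : ∀ n p q : ℕ, p + q ≤ n → 1 ≤ p → 1 ≤ q → p ≠ q →
    Wg c1 c2 q (p ^^^ q) = Wg c1 c2 p q ∧ Wg c1 c2 (p ^^^ q) p = Wg c1 c2 p q ∧
    Wg c1 c2 q p = -Wg c1 c2 p q := by
  intro n
  induction n with
  | zero => intro p q h hp hq _; exact absurd h (by omega)
  | succ n ih =>
    intro p q hpq hp hq hne
    rcases Nat.mod_two_eq_zero_or_one p with hp2 | hp2 <;>
      rcases Nat.mod_two_eq_zero_or_one q with hq2 | hq2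
    · -- p even, q even
      obtain ⟨r, rfl⟩ : ∃ r, p = 2 * r := ⟨p / 2, by omega⟩
      obtain ⟨s, rfl⟩ : ∃ s, q = 2 * s := ⟨q / 2, by omega⟩
      have hr1 : 1 ≤ r := by omega
      have hs1 : 1 ≤ s := by omega
      have hrs : r ≠ s := by omega
      obtain ⟨t, htdef⟩ : ∃ t, r ^^^ s = t := ⟨_, rfl⟩
      have h1 : r ^^^ t = s := by rw [← htdef, xcancel]
      have h2 : s ^^^ t = r := by rw [← htdef, Nat.xor_comm r s, xcancel]
      have ht0 : 1 ≤ t := by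
        rcases Nat.eq_zero_or_pos t with rfl | h
        · exact absurd (show r = s by rw [← xcancel r s, htdef, Nat.xor_zero]) hrs
        · exact h
      have htle : t ≤ r + s := htdef ▸ xor_le_add r s
      have hrt : r ≠ t := by intro hh; rw [← hh, Nat.xor_self] at h1; omega
      have hst : s ≠ t := by intro hh; rw [← hh, Nat.xor_self] at h2; omega
      obtain ⟨A1, B1, D1⟩ := ih r s (by omega) hr1 hs1 hrs
      obtain ⟨A2, B2, D2⟩ := ih r t (by omega) hr1 ht0 hrt
      obtain ⟨A3, B3, D3⟩ := ih s t (by omega) hs1 ht0 hst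
      rw [htdef] at A1 B1
      rw [h1] at A2 B2
      rw [h2] at A3 B3
      have hx : (2*r) ^^^ (2*s) = 2*t := by rw [xor_ee, htdef]
      rw [hx]
      refine ⟨?_, ?_, ?_⟩ <;> (rw [Wee, Wee]; split_ifs <;> linarith)
    · -- p even, q odd
      obtain ⟨r, rfl⟩ : ∃ r, p = 2 * r := ⟨p / 2, by omega⟩
      obtain ⟨s, rfl⟩ : ∃ s, q = 2 * s + 1 := ⟨q / 2, by omega⟩
      have hr1 : 1 ≤ r := by omega
      obtain ⟨t, htdef⟩ : ∃ t, r ^^^ s = t := ⟨_, rfl⟩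
      have hx : (2*r) ^^^ (2*s+1) = 2*t+1 := by rw [xor_eo, htdef]
      rw [hx]
      by_cases hs0 : s = 0
      · subst hs0
        have htr : t = r := by rw [← htdef, Nat.xor_zero]
        rw [htr]
        obtain ⟨z1, z2⟩ := Wzero c1 c2 r r le_rfl
        have hd : Wg c1 c2 r r = -1 := Wdiag c1 c2 r r le_rfl hr1
        refine ⟨?_, ?_, ?_⟩
        · rw [Woo, Weo]; split_ifs <;> linarith
        · rw [Woe, Weo]; split_ifs <;> linarith
        · rw [Woe, Weo]; split_ifs <;> linarith
      · by_cases hrs : r = s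
        · have ht0' : t = 0 := by rw [← htdef, hrs, Nat.xor_self]
          rw [ht0', hrs]
          obtain ⟨z1, z2⟩ := Wzero c1 c2 s s le_rfl
          have hd : Wg c1 c2 s s = -1 := Wdiag c1 c2 s s le_rfl (by omega)
          refine ⟨?_, ?_, ?_⟩
          · rw [Woo, Weo]; split_ifs <;> linarith
          · rw [Woe, Weo]; split_ifs <;> linarith
          · rw [Woe, Weo]; split_ifs <;> linarith
        · have hs1 : 1 ≤ s := by omega
          have h1 : r ^^^ t = s := by rw [← htdef, xcancel]
          have h2 : s ^^^ t = r := by rw [← htdef, Nat.xor_comm r s, xcancel]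
          have ht0 : 1 ≤ t := by
            rcases Nat.eq_zero_or_pos t with rfl | h
            · exact absurd (show r = s by rw [← xcancel r s, htdef, Nat.xor_zero]) hrs
            · exact h
          have htle : t ≤ r + s := htdef ▸ xor_le_add r s
          have hrt : r ≠ t := by intro hh; rw [← hh, Nat.xor_self] at h1; omega
          have hst : s ≠ t := by intro hh; rw [← hh, Nat.xor_self] at h2; omega
          obtain ⟨A1, B1, D1⟩ := ih r s (by omega) hr1 hs1 hrs
          obtain ⟨A2, B2, D2⟩ := ih r t (by omega) hr1 ht0 hrt
          obtain ⟨A3, B3, D3⟩ := ih s t (by omega) hs1 ht0 hst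
          rw [htdef] at A1 B1
          rw [h1] at A2 B2
          rw [h2] at A3 B3
          refine ⟨?_, ?_, ?_⟩
          · rw [Woo, Weo]; split_ifs <;> linarith
          · rw [Woe, Weo]; split_ifs <;> linarith
          · rw [Woe, Weo]; split_ifs <;> linarith
    · -- p odd, q even
      obtain ⟨r, rfl⟩ : ∃ r, p = 2 * r + 1 := ⟨p / 2, by omega⟩
      obtain ⟨s, rfl⟩ : ∃ s, q = 2 * s := ⟨q / 2, by omega⟩
      have hs1 : 1 ≤ s := by omega
      obtain ⟨t, htdef⟩ : ∃ t, r ^^^ s = t := ⟨_, rfl⟩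
      have hx : (2*r+1) ^^^ (2*s) = 2*t+1 := by rw [xor_oe, htdef]
      rw [hx]
      by_cases hr0 : r = 0
      · subst hr0
        have htr : t = s := by rw [← htdef, Nat.zero_xor]
        rw [htr]
        obtain ⟨z1, z2⟩ := Wzero c1 c2 s s le_rfl
        have hd : Wg c1 c2 s s = -1 := Wdiag c1 c2 s s le_rfl hs1
        refine ⟨?_, ?_, ?_⟩
        · rw [Weo, Woe]; split_ifs <;> linarith
        · rw [Woo, Woe]; split_ifs <;> linarith
        · rw [Weo, Woe]; split_ifs <;> linarith
      · by_cases hrs : r = s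
        · have ht0' : t = 0 := by rw [← htdef, hrs, Nat.xor_self]
          rw [ht0', hrs]
          obtain ⟨z1, z2⟩ := Wzero c1 c2 s s le_rfl
          have hd : Wg c1 c2 s s = -1 := Wdiag c1 c2 s s le_rfl hs1
          refine ⟨?_, ?_, ?_⟩
          · rw [Weo, Woe]; split_ifs <;> linarith
          · rw [Woo, Woe]; split_ifs <;> linarith
          · rw [Weo, Woe]; split_ifs <;> linarith
        · have hr1 : 1 ≤ r := by omega
          have h1 : r ^^^ t = s := by rw [← htdef, xcancel]
          have h2 : s ^^^ t = r := by rw [← htdef, Nat.xor_comm r s, xcancel]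
          have ht0 : 1 ≤ t := by
            rcases Nat.eq_zero_or_pos t with rfl | h
            · exact absurd (show r = s by rw [← xcancel r s, htdef, Nat.xor_zero]) hrs
            · exact h
          have htle : t ≤ r + s := htdef ▸ xor_le_add r s
          have hrt : r ≠ t := by intro hh; rw [← hh, Nat.xor_self] at h1; omega
          have hst : s ≠ t := by intro hh; rw [← hh, Nat.xor_self] at h2; omega
          obtain ⟨A1, B1, D1⟩ := ih r s (by omega) hr1 hs1 hrs
          obtain ⟨A2, B2, D2⟩ := ih r t (by omega) hr1 ht0 hrt
          obtain ⟨A3, B3, D3⟩ := ih s t (by omega) hs1 ht0 hst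
          rw [htdef] at A1 B1
          rw [h1] at A2 B2
          rw [h2] at A3 B3
          refine ⟨?_, ?_, ?_⟩
          · rw [Weo, Woe]; split_ifs <;> linarith
          · rw [Woo, Woe]; split_ifs <;> linarith
          · rw [Weo, Woe]; split_ifs <;> linarith
    · -- p odd, q odd
      obtain ⟨r, rfl⟩ : ∃ r, p = 2 * r + 1 := ⟨p / 2, by omega⟩
      obtain ⟨s, rfl⟩ : ∃ s, q = 2 * s + 1 := ⟨q / 2, by omega⟩
      have hrs : r ≠ s := by omega
      obtain ⟨t, htdef⟩ : ∃ t, r ^^^ s = t := ⟨_, rfl⟩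
      have hx : (2*r+1) ^^^ (2*s+1) = 2*t := by rw [xor_oo, htdef]
      rw [hx]
      by_cases hs0 : s = 0
      · subst hs0
        have hr1 : 1 ≤ r := by omega
        have htr : t = r := by rw [← htdef, Nat.xor_zero]
        rw [htr]
        obtain ⟨z1, z2⟩ := Wzero c1 c2 r r le_rfl
        have hd : Wg c1 c2 r r = -1 := Wdiag c1 c2 r r le_rfl hr1
        refine ⟨?_, ?_, ?_⟩
        · rw [Woe, Woo]; split_ifs <;> linarith
        · rw [Weo, Woo]; split_ifs <;> linarith
        · rw [Woo, Woo]; split_ifs <;> linarith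
      · by_cases hr0 : r = 0
        · subst hr0
          have hs1 : 1 ≤ s := by omega
          have htr : t = s := by rw [← htdef, Nat.zero_xor]
          rw [htr]
          obtain ⟨z1, z2⟩ := Wzero c1 c2 s s le_rfl
          have hd : Wg c1 c2 s s = -1 := Wdiag c1 c2 s s le_rfl hs1
          refine ⟨?_, ?_, ?_⟩
          · rw [Woe, Woo]; split_ifs <;> linarith
          · rw [Weo, Woo]; split_ifs <;> linarith
          · rw [Woo, Woo]; split_ifs <;> linarith
        · have hr1 : 1 ≤ r := by omega
          have hs1 : 1 ≤ s := by omega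
          have h1 : r ^^^ t = s := by rw [← htdef, xcancel]
          have h2 : s ^^^ t = r := by rw [← htdef, Nat.xor_comm r s, xcancel]
          have ht0 : 1 ≤ t := by
            rcases Nat.eq_zero_or_pos t with rfl | h
            · exact absurd (show r = s by rw [← xcancel r s, htdef, Nat.xor_zero]) hrs
            · exact h
          have htle : t ≤ r + s := htdef ▸ xor_le_add r s
          have hrt : r ≠ t := by intro hh; rw [← hh, Nat.xor_self] at h1; omega
          have hst : s ≠ t := by intro hh; rw [← hh, Nat.xor_self] at h2; omega
          obtain ⟨A1, B1, D1⟩ := ih r s (by omega) hr1 hs1 hrs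
          obtain ⟨A2, B2, D2⟩ := ih r t (by omega) hr1 ht0 hrt
          obtain ⟨A3, B3, D3⟩ := ih s t (by omega) hs1 ht0 hst
          rw [htdef] at A1 B1
          rw [h1] at A2 B2
          rw [h2] at A3 B3
          refine ⟨?_, ?_, ?_⟩
          · rw [Woe, Woo]; split_ifs <;> linarith
          · rw [Weo, Woo]; split_ifs <;> linarith
          · rw [Woo, Woo]; split_ifs <;> linarith

lemma omega0t_eqW : ∀ n p q, p + q ≤ n → omega0t p q = Wg true false p q := by
  intro n
  induction n with
  | zero =>
    intro p q h
    obtain ⟨rfl, rfl⟩ : p = 0 ∧ q = 0 := by omega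
    rw [omega0t, Wg]
    norm_num
  | succ n ih =>
    intro p q h
    rw [omega0t, Wg]
    try simp only [↓reduceIte]
    split_ifs <;> first | rfl | exact ‹False›.elim | exact ih _ _ (by omega) | rw [ih _ _ (by omega)]

lemma omega1t_eqW : ∀ n p q, p + q ≤ n → omega1t p q = Wg true true p q := by
  intro n
  induction n with
  | zero =>
    intro p q h
    obtain ⟨rfl, rfl⟩ : p = 0 ∧ q = 0 := by omega
    rw [omega1t, Wg]
    norm_num
  | succ n ih =>
    intro p q h
    rw [omega1t, Wg]
    try simp only [↓reduceIte]
    split_ifs <;> first | rfl | exact ‹False›.elim | exact ih _ _ (by omega) | rw [ih _ _ (by omega)]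

lemma omega2t_eqW : ∀ n p q, p + q ≤ n → omega2t p q = Wg false false p q := by
  intro n
  induction n with
  | zero =>
    intro p q h
    obtain ⟨rfl, rfl⟩ : p = 0 ∧ q = 0 := by omega
    rw [omega2t, Wg]
    norm_num
  | succ n ih =>
    intro p q h
    rw [omega2t, Wg]
    try simp only [↓reduceIte]
    split_ifs <;> first | rfl | exact ‹False›.elim | exact ih _ _ (by omega) | rw [ih _ _ (by omega)]

lemma omega3t_eqW : ∀ n p q, p + q ≤ n → omega3t p q = Wg false true p q := by
  intro n
  induction n with
  | zero =>
    intro p q h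
    obtain ⟨rfl, rfl⟩ : p = 0 ∧ q = 0 := by omega
    rw [omega3t, Wg]
    norm_num
  | succ n ih =>
    intro p q h
    rw [omega3t, Wg]
    try simp only [↓reduceIte]
    split_ifs <;> first | rfl | exact ‹False›.elim | exact ih _ _ (by omega) | rw [ih _ _ (by omega)]

/-- Each of the four transposed Cayley–Dickson twists satisfies the quaternion property. -/
theorem transposed_twists_quaternion_property :
    ∀ ω : ℕ → ℕ → ℤ, ω ∈ [omega0t, omega1t, omega2t, omega3t] →
      ∀ p q : ℕ, 1 ≤ p → 1 ≤ q → p ≠ q → ω p q = 1 →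
        ω q (p ^^^ q) = 1 ∧ ω (p ^^^ q) p = 1 := by
  have main : ∀ (c1 c2 : Bool) (p q : ℕ), 1 ≤ p → 1 ≤ q → p ≠ q → Wg c1 c2 p q = 1 →
      Wg c1 c2 q (p ^^^ q) = 1 ∧ Wg c1 c2 (p ^^^ q) p = 1 := by
    intro c1 c2 p q hp hq hne h1
    obtain ⟨A, B, _⟩ := Wmain c1 c2 (p + q) p q le_rfl hp hq hne
    exact ⟨by rw [A, h1], by rw [B, h1]⟩
  intro ω hω p q hp hq hne h1
  simp only [List.mem_cons, List.not_mem_nil, or_false] at hω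
  rcases hω with rfl | rfl | rfl | rfl
  · have e : ∀ a b, omega0t a b = Wg true false a b := fun a b => omega0t_eqW (a+b) a b le_rfl
    simp only [e] at h1 ⊢
    exact main true false p q hp hq hne h1
  · have e : ∀ a b, omega1t a b = Wg true true a b := fun a b => omega1t_eqW (a+b) a b le_rfl
    simp only [e] at h1 ⊢
    exact main true true p q hp hq hne h1
  · have e : ∀ a b, omega2t a b = Wg false false a b := fun a b => omega2t_eqW (a+b) a b le_rfl
    simp only [e] at h1 ⊢
    exact main false false p q hp hq hne h1
  · have e : ∀ a b, omega3t a b = Wg false true a b := fun a b => omega3t_eqW (a+b) a b le_rfl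
    simp only [e] at h1 ⊢
    exact main false true p q hp hq hne h1
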